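/- arXiv:0812.2145 — 2 statements merged into one kernel-verified Lean document; each statement's English description precedes it below -/
import Mathlib

section
/- For every d ≥ 1 and r ∈ (0,1) there exists a constant C > 0, depending only on d and r, with the following property. Let T > 0, let v : [0,T] × ℝ^d → ℝ^d be continuous, bounded, and Lipschitz in x uniformly in t, let 𝒳 be its flow, let O₀ ⊆ ℝ^d be open and O(t) := 𝒳(t,·)(O₀), and set V(t) := ∫₀ᵗ ‖v(s,·)‖_{Lip(O(s))} ds. Let f : [0,T] × ℝ^d → ℝ be of class C¹ and let g : [0,T] × ℝ^d → ℝ be continuous, with ∂_t f(t,x) + v(t,x)·∇_x f(t,x) = g(t,x) for all t ∈ [0,T] and x ∈ O(t). Then for every t ∈ [0,T]: ‖f(t,·)‖_{C^{0,r}(O(t))} ≤ C ( ‖f(0,·)‖_{C^{0,r}(O₀)} + ∫₀ᵗ ‖g(τ,·)‖_{C^{0,r}(O(τ))} e^{−C V(τ)} dτ ) e^{C V(t)}. -/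
open MeasureTheory Set ENNReal
open scoped RealInnerProductSpace NNReal Topology

noncomputable section

abbrev Ed (d : ℕ) := EuclideanSpace ℝ (Fin d)

variable {E F : Type*} [NormedAddCommGroup E] [NormedSpace ℝ E]
  [NormedAddCommGroup F] [NormedSpace ℝ F]

/-- Extended-real sup of the norm of `u` over `U`. -/
def supN (U : Set E) (u : E → F) : ℝ≥0∞ := ⨆ x ∈ U, (‖u x‖₊ : ℝ≥0∞)

/-- Extended-real Hölder seminorm of exponent `r` of `u` over `U`. -/
def holSemi (r : ℝ) (U : Set E) (u : E → F) : ℝ≥0∞ :=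
  ⨆ x ∈ U, ⨆ y ∈ U, (‖u x - u y‖₊ : ℝ≥0∞) / edist x y ^ r

/-- The `C^{0,r}(U)` norm. -/
def c0rN (r : ℝ) (U : Set E) (u : E → F) : ℝ≥0∞ := supN U u + holSemi r U u

/-- The Lipschitz norm over `U`. -/
def lipN (U : Set E) (u : E → F) : ℝ≥0∞ := supN U u + holSemi 1 U u

/-- The flow of a time-dependent vector field on `ℝ^d`. -/
def IsFlow (d : ℕ) (v : ℝ → Ed d → Ed d) (𝒳 : ℝ → Ed d → Ed d) : Prop :=
  ∀ t x, 𝒳 t x = x + ∫ τ in (0 : ℝ)..t, v τ (𝒳 τ x)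

section Flow

variable {d : ℕ} {v : ℝ → Ed d → Ed d} {𝒳 : ℝ → Ed d → Ed d} {T Cv : ℝ}

theorem flow_integrableOn (hvc : Continuous (Function.uncurry v))
    (hCv : ∀ t x, ‖v t x‖ ≤ Cv) (hX : IsFlow d v 𝒳) (hT : 0 ≤ T) (x : Ed d) :
    IntegrableOn (fun τ => v τ (𝒳 τ x)) (Ioc 0 T) := by
  set W : ℝ → Ed d := fun τ => v τ (𝒳 τ x) with hW
  set A : Set ℝ := {s | s ∈ Icc 0 T ∧ IntegrableOn W (Ioc 0 s)} with hA
  have h0A : (0 : ℝ) ∈ A := ⟨⟨le_refl _, hT⟩, by simp [IntegrableOn]⟩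
  have hbdd : BddAbove A := ⟨T, fun s hs => hs.1.2⟩
  set b := sSup A with hb
  have hbmem : b ∈ Icc 0 T := ⟨le_csSup hbdd h0A, csSup_le ⟨0, h0A⟩ fun s hs => hs.1.2⟩
  -- continuity of the flow on [0, s] for s ∈ A
  have hcont : ∀ s, s ∈ A → ContinuousOn (fun τ => 𝒳 τ x) (Icc 0 s) := by
    intro s hsA
    have hWint : IntegrableOn W (Icc 0 s) :=
      (integrableOn_Icc_iff_integrableOn_Ioc).2 hsA.2
    have hprim : ContinuousOn (fun u => ∫ τ in (0:ℝ)..u, W τ) (Icc 0 s) := by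
      have := intervalIntegral.continuousOn_primitive_interval
        (f := W) (a := (0:ℝ)) (b := s) (μ := volume) ?_
      · rwa [uIcc_of_le hsA.1.1] at this
      · rwa [uIcc_of_le hsA.1.1]
    exact (continuousOn_const.add hprim).congr fun u _ => hX u x
  -- continuity of W on [0, s] for s ∈ A
  have hWcont : ∀ s, s ∈ A → ContinuousOn W (Icc 0 s) := by
    intro s hsA
    exact hvc.comp_continuousOn (continuousOn_id.prodMk (hcont s hsA))
  -- [0, b) ⊆ A
  have hlt : ∀ s ∈ Icc (0:ℝ) T, s < b → s ∈ A := by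
    intro s hs hsb
    obtain ⟨s', hs'A, hss'⟩ := exists_lt_of_lt_csSup ⟨0, h0A⟩ hsb
    exact ⟨hs, hs'A.2.mono_set (Ioc_subset_Ioc_right hss'.le)⟩
  -- W is continuous on [0, b)
  have hWb : ContinuousOn W (Ico 0 b) := by
    intro τ hτ
    obtain ⟨s', hs'A, hss'⟩ := exists_lt_of_lt_csSup ⟨0, h0A⟩ hτ.2
    have h1 : ContinuousWithinAt W (Icc 0 s') τ :=
      (hWcont s' hs'A) τ ⟨hτ.1, hss'.le⟩
    refine h1.mono_of_mem_nhdsWithin ?_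
    have : Ico (0:ℝ) b ∩ Iic s' ⊆ Icc 0 s' := fun u hu => ⟨hu.1.1, hu.2⟩
    exact Filter.mem_of_superset
      (Filter.inter_mem self_mem_nhdsWithin
        (nhdsWithin_le_nhds (Iic_mem_nhds hss'))) this
  -- hence W is integrable on Ioc 0 b
  have hIb : IntegrableOn W (Ioc 0 b) := by
    rw [integrableOn_Ioc_iff_integrableOn_Ioo]
    have hmeas : AEStronglyMeasurable W (volume.restrict (Ioo 0 b)) :=
      (hWb.mono Ioo_subset_Ico_self).aestronglyMeasurable measurableSet_Ioo
    refine Integrable.mono' (g := fun _ => Cv) ?_ hmeas ?_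
    · exact integrableOn_const measure_Ioo_lt_top.ne (by simp)
    · exact Filter.Eventually.of_forall fun τ => hCv τ _
  -- b = T
  have hbT : b = T := by
    by_contra hne
    have hbltT : b < T := lt_of_le_of_ne hbmem.2 hne
    have hconst : ∀ s, s ∈ Ioc b T → 𝒳 s x = x := by
      intro s hs
      have hsnA : s ∉ A := fun hsA => (le_csSup hbdd hsA).not_gt hs.1
      have hni : ¬ IntervalIntegrable W volume 0 s := by
        rw [intervalIntegrable_iff_integrableOn_Ioc_of_le (hbmem.1.trans hs.1.le)]
        exact fun h => hsnA ⟨⟨hbmem.1.trans hs.1.le, hs.2⟩, h⟩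
      have heq := hX s x
      rwa [intervalIntegral.integral_undef hni, add_zero] at heq
    have hI2 : IntegrableOn W (Ioc b T) := by
      have : IntegrableOn (fun s => v s x) (Ioc b T) :=
        (hvc.comp (continuous_id.prodMk continuous_const)).integrableOn_Ioc
      exact this.congr_fun (fun s hs => by simp [hW, hconst s hs]) measurableSet_Ioc
    have hIT : IntegrableOn W (Ioc 0 T) := by
      have := hIb.union hI2
      rwa [Ioc_union_Ioc_eq_Ioc hbmem.1 hbmem.2] at this
    exact hbltT.not_ge (le_csSup hbdd ⟨⟨le_refl _ |>.trans hT, le_refl _⟩, hIT⟩)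
  rwa [hbT] at hIb

end Flow

section Flow2

variable {d : ℕ} {v : ℝ → Ed d → Ed d} {𝒳 : ℝ → Ed d → Ed d} {T Cv : ℝ}

theorem flow_contOn (hvc : Continuous (Function.uncurry v))
    (hCv : ∀ t x, ‖v t x‖ ≤ Cv) (hX : IsFlow d v 𝒳) (hT : 0 ≤ T) (x : Ed d) :
    ContinuousOn (fun τ => 𝒳 τ x) (Icc 0 T) := by
  have hI := flow_integrableOn hvc hCv hX hT x
  have hWint : IntegrableOn (fun τ => v τ (𝒳 τ x)) (Icc 0 T) :=
    (integrableOn_Icc_iff_integrableOn_Ioc).2 hI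
  have hprim : ContinuousOn (fun u => ∫ τ in (0:ℝ)..u, v τ (𝒳 τ x)) (Icc 0 T) := by
    have := intervalIntegral.continuousOn_primitive_interval
      (f := fun τ => v τ (𝒳 τ x)) (a := (0:ℝ)) (b := T) (μ := volume)
      (by rwa [uIcc_of_le hT])
    rwa [uIcc_of_le hT] at this
  exact (continuousOn_const.add hprim).congr fun u _ => hX u x

theorem flow_W_contOn (hvc : Continuous (Function.uncurry v))
    (hCv : ∀ t x, ‖v t x‖ ≤ Cv) (hX : IsFlow d v 𝒳) (hT : 0 ≤ T) (x : Ed d) :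
    ContinuousOn (fun τ => v τ (𝒳 τ x)) (Icc 0 T) :=
  hvc.comp_continuousOn (continuousOn_id.prodMk (flow_contOn hvc hCv hX hT x))

theorem flow_hasDerivWithinAt (hvc : Continuous (Function.uncurry v))
    (hCv : ∀ t x, ‖v t x‖ ≤ Cv) (hX : IsFlow d v 𝒳) (hT : 0 ≤ T) (x : Ed d)
    {τ : ℝ} (hτ : τ ∈ Ico 0 T) :
    HasDerivWithinAt (fun u => 𝒳 u x) (v τ (𝒳 τ x)) (Ici τ) τ := by
  set W : ℝ → Ed d := fun σ => v σ (𝒳 σ x) with hWdef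
  have hWc : ContinuousOn W (Icc 0 T) := flow_W_contOn hvc hCv hX hT x
  have hIccmem : Icc (0:ℝ) T ∈ 𝓝[Ici τ] τ := by
    refine Filter.mem_of_superset
      (Filter.inter_mem self_mem_nhdsWithin (nhdsWithin_le_nhds (Iic_mem_nhds hτ.2))) ?_
    exact fun u hu => ⟨hτ.1.trans hu.1, hu.2⟩
  have hIccmem' : Icc (0:ℝ) T ∈ 𝓝[Ioi τ] τ :=
    nhdsWithin_mono τ Ioi_subset_Ici_self hIccmem
  have hint : IntervalIntegrable W volume 0 τ := by
    rw [intervalIntegrable_iff_integrableOn_Ioc_of_le hτ.1]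
    exact (flow_integrableOn hvc hCv hX hT x).mono_set (Ioc_subset_Ioc_right hτ.2.le)
  have hmeas : StronglyMeasurableAtFilter W (𝓝[Ioi τ] τ) :=
    ⟨Icc 0 T, hIccmem', hWc.aestronglyMeasurable measurableSet_Icc⟩
  have hcw : ContinuousWithinAt W (Ioi τ) τ :=
    ((hWc τ ⟨hτ.1, hτ.2.le⟩).mono_of_mem_nhdsWithin hIccmem).mono Ioi_subset_Ici_self
  have hprim : HasDerivWithinAt (fun u => ∫ σ in (0:ℝ)..u, W σ) (W τ) (Ici τ) τ :=
    intervalIntegral.integral_hasDerivWithinAt_right hint hmeas hcw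
  have : HasDerivWithinAt (fun u => x + ∫ σ in (0:ℝ)..u, W σ) (W τ) (Ici τ) τ := by
    exact hprim.const_add x
  exact this.congr (fun u _ => hX u x) (hX τ x)

end Flow2

section Dist

variable {d : ℕ} {v : ℝ → Ed d → Ed d} {𝒳 : ℝ → Ed d → Ed d} {T Cv : ℝ} {K : ℝ≥0}

theorem flow_ne (hvc : Continuous (Function.uncurry v)) (hCv : ∀ t x, ‖v t x‖ ≤ Cv)
    (hK : ∀ s, LipschitzWith K (v s)) (hX : IsFlow d v 𝒳) (hT : 0 ≤ T)
    {x y : Ed d} {t : ℝ} (ht : t ∈ Icc 0 T) (hne : 𝒳 t x ≠ 𝒳 t y) :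
    ∀ σ ∈ Icc (0:ℝ) t, 𝒳 σ x ≠ 𝒳 σ y := by
  intro σ hσ heq
  have h1 : Icc σ t ⊆ Icc 0 T := Icc_subset_Icc hσ.1 ht.2
  have huniq := ODE_solution_unique (v := v) hK
    ((flow_contOn hvc hCv hX hT x).mono h1)
    (fun u hu => flow_hasDerivWithinAt hvc hCv hX hT x
      ⟨hσ.1.trans hu.1, lt_of_lt_of_le hu.2 ht.2⟩)
    ((flow_contOn hvc hCv hX hT y).mono h1)
    (fun u hu => flow_hasDerivWithinAt hvc hCv hX hT y
      ⟨hσ.1.trans hu.1, lt_of_lt_of_le hu.2 ht.2⟩)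
    heq
  exact hne (huniq ⟨hσ.2, le_refl t⟩)

theorem dist_flow_backward (hvc : Continuous (Function.uncurry v))
    (hCv : ∀ t x, ‖v t x‖ ≤ Cv)
    (hK : ∀ s, LipschitzWith K (v s)) (hX : IsFlow d v 𝒳) (hT : 0 ≤ T)
    {x y : Ed d} {t τ : ℝ} (ht : t ∈ Icc 0 T) (hτ : τ ∈ Icc 0 t) (hne : 𝒳 t x ≠ 𝒳 t y) :
    dist (𝒳 τ x) (𝒳 τ y) ≤ dist (𝒳 t x) (𝒳 t y) *
      Real.exp (∫ σ in τ..t, ‖v σ (𝒳 σ x) - v σ (𝒳 σ y)‖ / dist (𝒳 σ x) (𝒳 σ y)) := by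
  have htT : Icc (0:ℝ) t ⊆ Icc 0 T := Icc_subset_Icc_right ht.2
  set u : ℝ → Ed d := fun σ => 𝒳 σ x - 𝒳 σ y with hu_def
  set u' : ℝ → Ed d := fun σ => v σ (𝒳 σ x) - v σ (𝒳 σ y) with hu'_def
  have hne' := flow_ne hvc hCv hK hX hT ht hne
  have hupos : ∀ σ ∈ Icc (0:ℝ) t, 0 < ‖u σ‖ := fun σ hσ =>
    norm_pos_iff.2 (sub_ne_zero.2 (hne' σ hσ))
  have hucont : ContinuousOn u (Icc 0 t) :=
    ((flow_contOn hvc hCv hX hT x).mono htT).sub ((flow_contOn hvc hCv hX hT y).mono htT)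
  have hu'cont : ContinuousOn u' (Icc 0 t) :=
    ((flow_W_contOn hvc hCv hX hT x).mono htT).sub ((flow_W_contOn hvc hCv hX hT y).mono htT)
  set m : ℝ → ℝ := fun σ => (1/2) * Real.log (⟪u σ, u σ⟫) with hm_def
  set m' : ℝ → ℝ := fun σ => ⟪u σ, u' σ⟫ / (‖u σ‖ ^ 2) with hm'_def
  have hmeq : ∀ σ, m σ = Real.log ‖u σ‖ := by
    intro σ
    show (1/2 : ℝ) * Real.log (⟪u σ, u σ⟫) = Real.log ‖u σ‖
    rw [real_inner_self_eq_norm_sq, Real.log_pow]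
    push_cast
    ring
  have hderiv : ∀ σ ∈ Ico (0:ℝ) t, HasDerivWithinAt m (m' σ) (Ici σ) σ := by
    intro σ hσ
    have hσ' : σ ∈ Ico (0:ℝ) T := ⟨hσ.1, lt_of_lt_of_le hσ.2 ht.2⟩
    have hux : HasDerivWithinAt u (u' σ) (Ici σ) σ :=
      (flow_hasDerivWithinAt hvc hCv hX hT x hσ').sub
        (flow_hasDerivWithinAt hvc hCv hX hT y hσ')
    have hN : HasDerivWithinAt (fun σ => ⟪u σ, u σ⟫)
        (⟪u σ, u' σ⟫ + ⟪u' σ, u σ⟫) (Ici σ) σ := hux.inner ℝ hux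
    have hNpos : (0:ℝ) < ⟪u σ, u σ⟫ := by
      rw [real_inner_self_eq_norm_sq]
      exact pow_pos (hupos σ ⟨hσ.1, hσ.2.le⟩) 2
    have hlog := (Real.hasDerivAt_log hNpos.ne').comp_hasDerivWithinAt σ hN
    have h2 := hlog.const_mul (1/2 : ℝ)
    have heq2 : (1/2 : ℝ) * ((⟪u σ, u σ⟫)⁻¹ * (⟪u σ, u' σ⟫ + ⟪u' σ, u σ⟫)) = m' σ := by
      show _ = ⟪u σ, u' σ⟫ / ‖u σ‖ ^ 2
      rw [real_inner_comm (u' σ) (u σ), ← real_inner_self_eq_norm_sq]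
      have hne0 : ⟪u σ, u σ⟫ ≠ 0 := hNpos.ne'
      field_simp
      ring
    rw [← heq2]
    exact h2
  have hmcont : ContinuousOn m (Icc 0 t) := by
    apply continuousOn_const.mul
    apply ContinuousOn.log (hucont.inner hucont)
    intro σ hσ
    rw [real_inner_self_eq_norm_sq]
    exact (pow_pos (hupos σ hσ) 2).ne'
  have hm'cont : ContinuousOn m' (Icc 0 t) :=
    (hucont.inner hu'cont).div (hucont.norm.pow 2)
      (fun σ hσ => (pow_pos (hupos σ hσ) 2).ne')
  have hFTC : ∫ σ in τ..t, m' σ = m t - m τ := by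
    apply intervalIntegral.integral_eq_sub_of_hasDeriv_right_of_le hτ.2
      (hmcont.mono (Icc_subset_Icc_left hτ.1))
      (fun σ hσ => ((hderiv σ ⟨hτ.1.trans hσ.1.le, hσ.2⟩).mono Ioi_subset_Ici_self))
    apply ContinuousOn.intervalIntegrable
    rw [uIcc_of_le hτ.2]
    exact hm'cont.mono (Icc_subset_Icc_left hτ.1)
  set q : ℝ → ℝ := fun σ => ‖u' σ‖ / ‖u σ‖ with hq_def
  have hqcont : ContinuousOn q (Icc 0 t) :=
    hu'cont.norm.div hucont.norm (fun σ hσ => (hupos σ hσ).ne')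
  have hmq : ∀ σ ∈ Icc τ t, -m' σ ≤ q σ := by
    intro σ hσ
    have hσ0 : σ ∈ Icc (0:ℝ) t := ⟨hτ.1.trans hσ.1, hσ.2⟩
    have h1 : -m' σ ≤ |m' σ| := neg_le_abs _
    refine h1.trans ?_
    have hm'σ : |m' σ| = |⟪u σ, u' σ⟫| / ‖u σ‖ ^ 2 := by
      show |⟪u σ, u' σ⟫ / ‖u σ‖ ^ 2| = _
      rw [abs_div, abs_of_nonneg (sq_nonneg ‖u σ‖)]
    rw [hm'σ]
    have h2 : |⟪u σ, u' σ⟫| ≤ ‖u σ‖ * ‖u' σ‖ := abs_real_inner_le_norm _ _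
    have h3 : ‖u σ‖ * ‖u' σ‖ / ‖u σ‖ ^ 2 = q σ := by
      show _ = ‖u' σ‖ / ‖u σ‖
      rw [sq]
      rw [mul_div_mul_left _ _ (hupos σ hσ0).ne']
    rw [← h3]
    exact (div_le_div_iff_of_pos_right (pow_pos (hupos σ hσ0) 2)).2 h2
  have hint1 : m τ - m t ≤ ∫ σ in τ..t, q σ := by
    have h1 : m τ - m t = ∫ σ in τ..t, -m' σ := by
      rw [intervalIntegral.integral_neg, hFTC]; ring
    rw [h1]
    apply intervalIntegral.integral_mono_on hτ.2 ?_ ?_ hmq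
    · exact (ContinuousOn.intervalIntegrable (by
        rw [uIcc_of_le hτ.2]; exact hm'cont.mono (Icc_subset_Icc_left hτ.1))).neg
    · exact ContinuousOn.intervalIntegrable (by
        rw [uIcc_of_le hτ.2]; exact hqcont.mono (Icc_subset_Icc_left hτ.1))
  have hqeq : (∫ σ in τ..t, ‖v σ (𝒳 σ x) - v σ (𝒳 σ y)‖ / dist (𝒳 σ x) (𝒳 σ y))
      = ∫ σ in τ..t, q σ := by
    apply intervalIntegral.integral_congr
    intro σ _
    simp only [hq_def, hu_def, hu'_def, dist_eq_norm]
  have h0t : t ∈ Icc (0:ℝ) t := ⟨hτ.1.trans hτ.2, le_refl _⟩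
  rw [dist_eq_norm, dist_eq_norm, hqeq]
  have hexpτ : ‖u τ‖ = Real.exp (m τ) := by
    rw [hmeq, Real.exp_log (hupos τ ⟨hτ.1, hτ.2⟩)]
  have hexpt : ‖u t‖ = Real.exp (m t) := by
    rw [hmeq, Real.exp_log (hupos t h0t)]
  show ‖u τ‖ ≤ ‖u t‖ * _
  rw [hexpτ, hexpt, ← Real.exp_add]
  exact Real.exp_le_exp.2 (by linarith)

end Dist

section Helpers

variable {U : Set E} {u : E → F}

theorem le_supN' {x : E} (hx : x ∈ U) : (‖u x‖₊ : ℝ≥0∞) ≤ supN U u := by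
  show _ ≤ ⨆ x ∈ U, (‖u x‖₊ : ℝ≥0∞)
  exact le_biSup (fun x => (‖u x‖₊ : ℝ≥0∞)) hx

theorem div_le_holSemi {r : ℝ} {x y : E} (hx : x ∈ U) (hy : y ∈ U) :
    (‖u x - u y‖₊ : ℝ≥0∞) / edist x y ^ r ≤ holSemi r U u := by
  show _ ≤ ⨆ x ∈ U, ⨆ y ∈ U, (‖u x - u y‖₊ : ℝ≥0∞) / edist x y ^ r
  refine le_trans (le_biSup (f := fun y => (‖u x - u y‖₊ : ℝ≥0∞) / edist x y ^ r) hy) ?_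
  exact le_biSup (fun x => ⨆ y ∈ U, (‖u x - u y‖₊ : ℝ≥0∞) / edist x y ^ r) hx

theorem nnnorm_le_holSemi_mul {r : ℝ} (hr : 0 < r) {x y : E} (hx : x ∈ U) (hy : y ∈ U) :
    (‖u x - u y‖₊ : ℝ≥0∞) ≤ holSemi r U u * edist x y ^ r := by
  rcases eq_or_ne x y with rfl | hxy
  · simp
  · have h0 : edist x y ^ r ≠ 0 :=
      (ENNReal.rpow_pos (pos_iff_ne_zero.2 fun h => hxy (edist_eq_zero.1 h))
        (edist_ne_top x y)).ne'
    have htop : edist x y ^ r ≠ ∞ := ENNReal.rpow_ne_top_of_nonneg hr.le (edist_ne_top x y)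
    calc (‖u x - u y‖₊ : ℝ≥0∞)
        = (‖u x - u y‖₊ : ℝ≥0∞) / edist x y ^ r * edist x y ^ r :=
          (ENNReal.div_mul_cancel h0 htop).symm
      _ ≤ holSemi r U u * edist x y ^ r := mul_le_mul_left (div_le_holSemi hx hy) _

theorem ofReal_div_le_holSemi_one {x y : E} (hx : x ∈ U) (hy : y ∈ U) (hxy : x ≠ y) :
    ENNReal.ofReal (‖u x - u y‖ / dist x y) ≤ holSemi 1 U u := by
  have hd : 0 < dist x y := dist_pos.2 hxy
  rw [ENNReal.ofReal_div_of_pos hd, ofReal_norm, enorm_eq_nnnorm, ← edist_dist]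
  have := div_le_holSemi (r := 1) (u := u) hx hy
  rwa [ENNReal.rpow_one] at this

theorem lipN_le_of_bounds {K : ℝ≥0} {Cv : ℝ} (hCv : ∀ x, ‖u x‖ ≤ Cv)
    (hK : LipschitzWith K u) : lipN U u ≤ ENNReal.ofReal Cv + K := by
  refine add_le_add ?_ ?_
  · refine iSup₂_le fun z _ => ?_
    rw [← enorm_eq_nnnorm, ← ofReal_norm]
    exact ENNReal.ofReal_le_ofReal (hCv z)
  · refine iSup₂_le fun z _ => iSup₂_le fun w _ => ?_
    rw [ENNReal.rpow_one]
    refine ENNReal.div_le_of_le_mul ?_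
    calc (‖u z - u w‖₊ : ℝ≥0∞) = edist (u z) (u w) := by
          rw [edist_eq_enorm_sub, enorm_eq_nnnorm]
      _ ≤ K * edist z w := hK z w

theorem lintegral_Ioc_superadd {f g : ℝ → ℝ≥0∞} {a b c : ℝ} (hab : a ≤ b) (hbc : b ≤ c)
    (hgle : ∀ σ ∈ Ioc b c, g σ ≤ f σ) :
    (∫⁻ σ in Ioc a b, f σ) + ∫⁻ σ in Ioc b c, g σ ≤ ∫⁻ σ in Ioc a c, f σ := by
  obtain ⟨h, hmeas, hle, heq⟩ := exists_measurable_le_lintegral_eq (volume.restrict (Ioc a b)) f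
  have key : ∀ σ, (Ioc a b).indicator h σ + (Ioc b c).indicator g σ
      ≤ (Ioc a c).indicator f σ := by
    intro σ
    by_cases h1 : σ ∈ Ioc a b
    · have h2 : σ ∉ Ioc b c := fun h2 => absurd h1.2 (not_le.2 h2.1)
      have h3 : σ ∈ Ioc a c := ⟨h1.1, h1.2.trans hbc⟩
      simp only [indicator_of_mem h1, indicator_of_notMem h2, indicator_of_mem h3, add_zero]
      exact hle σ
    · by_cases h2 : σ ∈ Ioc b c
      · have h3 : σ ∈ Ioc a c := ⟨lt_of_le_of_lt hab h2.1, h2.2⟩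
        simp only [indicator_of_notMem h1, indicator_of_mem h2, indicator_of_mem h3, zero_add]
        exact hgle σ h2
      · simp [indicator_of_notMem h1, indicator_of_notMem h2]
  calc (∫⁻ σ in Ioc a b, f σ) + ∫⁻ σ in Ioc b c, g σ
      = (∫⁻ σ in Ioc a b, h σ) + ∫⁻ σ in Ioc b c, g σ := by rw [heq]
    _ = (∫⁻ σ, (Ioc a b).indicator h σ) + ∫⁻ σ, (Ioc b c).indicator g σ := by
        rw [lintegral_indicator measurableSet_Ioc, lintegral_indicator measurableSet_Ioc]
    _ = ∫⁻ σ, ((Ioc a b).indicator h σ + (Ioc b c).indicator g σ) := by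
        rw [← lintegral_add_left (hmeas.indicator measurableSet_Ioc)]
    _ ≤ ∫⁻ σ, (Ioc a c).indicator f σ := lintegral_mono key
    _ = ∫⁻ σ in Ioc a c, f σ := lintegral_indicator measurableSet_Ioc _

end Helpers

section Transport

variable {d : ℕ} {v : ℝ → Ed d → Ed d} {𝒳 : ℝ → Ed d → Ed d} {T Cv : ℝ}
  {O₀ : Set (Ed d)} {f g : ℝ → Ed d → ℝ}

theorem flow_zero (hX : IsFlow d v 𝒳) (x : Ed d) : 𝒳 0 x = x := by
  have := hX 0 x
  rwa [intervalIntegral.integral_same, add_zero] at this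

theorem transport_identity (hvc : Continuous (Function.uncurry v))
    (hCv : ∀ t x, ‖v t x‖ ≤ Cv) (hX : IsFlow d v 𝒳) (hT : 0 ≤ T)
    (hf : ContDiff ℝ 1 (Function.uncurry f)) (hg : Continuous (Function.uncurry g))
    (hpde : ∀ t ∈ Icc (0:ℝ) T, ∀ x ∈ 𝒳 t '' O₀,
      deriv (fun τ => f τ x) t + fderiv ℝ (f t) x (v t x) = g t x)
    {x : Ed d} (hx : x ∈ O₀) {t : ℝ} (ht : t ∈ Icc 0 T) :
    f t (𝒳 t x) = f 0 x + ∫ τ in (0:ℝ)..t, g τ (𝒳 τ x) := by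
  set φ : ℝ → Ed d := fun τ => 𝒳 τ x with hφ_def
  have hφc : ContinuousOn φ (Icc 0 T) := flow_contOn hvc hCv hX hT x
  have hcont : ContinuousOn (fun τ => f τ (φ τ)) (Icc 0 t) :=
    hf.continuous.comp_continuousOn
      (continuousOn_id.prodMk (hφc.mono (Icc_subset_Icc_right ht.2)))
  have hder : ∀ τ ∈ Ioo (0:ℝ) t, HasDerivWithinAt (fun τ => f τ (φ τ)) (g τ (φ τ)) (Ioi τ) τ := by
    intro τ hτ
    have hτT : τ ∈ Icc (0:ℝ) T := ⟨hτ.1.le, (hτ.2.trans_le ht.2).le⟩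
    set F := fderiv ℝ (Function.uncurry f) (τ, φ τ) with hF_def
    have hF : HasFDerivAt (Function.uncurry f) F (τ, φ τ) :=
      (hf.differentiable one_ne_zero (τ, φ τ)).hasFDerivAt
    have hφd : HasDerivWithinAt φ (v τ (φ τ)) (Ici τ) τ :=
      flow_hasDerivWithinAt hvc hCv hX hT x ⟨hτ.1.le, hτ.2.trans_le ht.2⟩
    have hpair : HasDerivWithinAt (fun τ => ((τ, φ τ) : ℝ × Ed d)) (1, v τ (φ τ)) (Ici τ) τ :=
      (hasDerivWithinAt_id τ _).prodMk hφd
    have hcomp : HasDerivWithinAt (fun τ => f τ (φ τ)) (F (1, v τ (φ τ))) (Ici τ) τ :=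
      by have := hF.comp_hasDerivWithinAt τ hpair; exact this
    have h1 : HasDerivAt (fun s => f s (φ τ)) (F (1, 0)) τ := by
      have := hF.comp_hasDerivAt τ ((hasDerivAt_id τ).prodMk (hasDerivAt_const τ (φ τ)))
      exact this
    have h2 : HasFDerivAt (f τ) (F.comp (ContinuousLinearMap.inr ℝ ℝ (Ed d))) (φ τ) := by
      have hinr : HasFDerivAt (fun z : Ed d => ((τ, z) : ℝ × Ed d))
          (ContinuousLinearMap.inr ℝ ℝ (Ed d)) (φ τ) := (hasFDerivAt_prodMk_right τ (φ τ))
      exact hF.comp (φ τ) hinr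
    have hsplit : F (1, v τ (φ τ)) = F (1, 0) + F (0, v τ (φ τ)) := by
      rw [← map_add]
      norm_num
    have hgoal : F (1, v τ (φ τ)) = g τ (φ τ) := by
      rw [hsplit]
      have e1 : deriv (fun s => f s (φ τ)) τ = F (1, 0) := h1.deriv
      have e2 : fderiv ℝ (f τ) (φ τ) (v τ (φ τ)) = F (0, v τ (φ τ)) := by
        rw [h2.fderiv]
        rfl
      rw [← e1, ← e2]
      exact hpde τ hτT (φ τ) ⟨x, hx, rfl⟩
    exact (hgoal ▸ hcomp).mono Ioi_subset_Ici_self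
  have hint : IntervalIntegrable (fun τ => g τ (φ τ)) volume 0 t := by
    apply ContinuousOn.intervalIntegrable
    rw [uIcc_of_le ht.1]
    exact hg.comp_continuousOn (continuousOn_id.prodMk (hφc.mono (Icc_subset_Icc_right ht.2)))
  have hFTC := intervalIntegral.integral_eq_sub_of_hasDeriv_right_of_le ht.1 hcont hder hint
  have h0 : φ 0 = x := flow_zero hX x
  rw [hFTC]
  rw [hφ_def] at h0 ⊢
  rw [h0]
  ring

end Transport

section Key

variable {d : ℕ} {v : ℝ → Ed d → Ed d} {𝒳 : ℝ → Ed d → Ed d} {T Cv : ℝ} {K : ℝ≥0}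
  {O₀ : Set (Ed d)}

theorem edist_flow_key (hvc : Continuous (Function.uncurry v))
    (hCv : ∀ t x, ‖v t x‖ ≤ Cv)
    (hK : ∀ s, LipschitzWith K (v s)) (hX : IsFlow d v 𝒳) (hT : 0 ≤ T)
    {x y : Ed d} (hx : x ∈ O₀) (hy : y ∈ O₀) {t τ : ℝ} (ht : t ∈ Icc 0 T)
    (hτ : τ ∈ Icc 0 t) (hne : 𝒳 t x ≠ 𝒳 t y) :
    edist (𝒳 τ x) (𝒳 τ y) ≤ edist (𝒳 t x) (𝒳 t y) *
      ENNReal.ofReal (Real.exp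
        ((∫⁻ σ in Ioc (0:ℝ) t, lipN (𝒳 σ '' O₀) (v σ)).toReal
          - (∫⁻ σ in Ioc (0:ℝ) τ, lipN (𝒳 σ '' O₀) (v σ)).toReal)) := by
  set ℓ : ℝ → ℝ≥0∞ := fun σ => lipN (𝒳 σ '' O₀) (v σ) with hℓ_def
  set q : ℝ → ℝ := fun σ => ‖v σ (𝒳 σ x) - v σ (𝒳 σ y)‖ / dist (𝒳 σ x) (𝒳 σ y) with hq_def
  have htT : Icc (0:ℝ) t ⊆ Icc 0 T := Icc_subset_Icc_right ht.2
  have hne' := flow_ne hvc hCv hK hX hT ht hne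
  have hdist := dist_flow_backward hvc hCv hK hX hT ht hτ hne
  -- continuity and nonnegativity of q
  have hqcont : ContinuousOn q (Icc 0 t) := by
    apply ContinuousOn.div
    · exact (((flow_W_contOn hvc hCv hX hT x).mono htT).sub
        ((flow_W_contOn hvc hCv hX hT y).mono htT)).norm
    · exact continuous_dist.comp_continuousOn
        (((flow_contOn hvc hCv hX hT x).mono htT).prodMk
          ((flow_contOn hvc hCv hX hT y).mono htT))
    · exact fun σ hσ => (dist_pos.2 (hne' σ hσ)).ne'
  have hqnn : ∀ σ, 0 ≤ q σ := fun σ => div_nonneg (norm_nonneg _) dist_nonneg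
  have hqint : IntegrableOn q (Ioc τ t) :=
    ((hqcont.mono (Icc_subset_Icc_left hτ.1)).integrableOn_Icc).mono_set Ioc_subset_Icc_self
  -- the interval integral of q as a lintegral
  have hinteq : ENNReal.ofReal (∫ σ in τ..t, q σ) = ∫⁻ σ in Ioc τ t, ENNReal.ofReal (q σ) := by
    rw [intervalIntegral.integral_of_le hτ.2]
    exact ofReal_integral_eq_lintegral_ofReal hqint (Filter.Eventually.of_forall hqnn)
  -- pointwise domination by ℓ
  have hpt : ∀ σ ∈ Ioc τ t, ENNReal.ofReal (q σ) ≤ ℓ σ := by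
    intro σ hσ
    have hσ' : σ ∈ Icc (0:ℝ) t := ⟨hτ.1.trans hσ.1.le, hσ.2⟩
    refine le_trans (ofReal_div_le_holSemi_one (U := 𝒳 σ '' O₀)
      (mem_image_of_mem _ hx) (mem_image_of_mem _ hy) (hne' σ hσ')) ?_
    exact le_add_self
  -- superadditivity
  have hsuper : (∫⁻ σ in Ioc (0:ℝ) τ, ℓ σ) + ∫⁻ σ in Ioc τ t, ENNReal.ofReal (q σ)
      ≤ ∫⁻ σ in Ioc (0:ℝ) t, ℓ σ := lintegral_Ioc_superadd hτ.1 hτ.2 hpt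
  -- finiteness
  have hCv0 : (0:ℝ) ≤ Cv := (norm_nonneg _).trans (hCv 0 0)
  have hfin : ∀ s : ℝ, (∫⁻ σ in Ioc (0:ℝ) s, ℓ σ) ≠ ∞ := by
    intro s
    have hb : ∀ σ, ℓ σ ≤ ENNReal.ofReal Cv + K := fun σ =>
      lipN_le_of_bounds (fun z => hCv σ z) (hK σ)
    refine ne_of_lt (lt_of_le_of_lt (lintegral_mono hb) ?_)
    rw [setLIntegral_const]
    exact ENNReal.mul_lt_top
      (lt_top_iff_ne_top.2 (ENNReal.add_ne_top.2 ⟨ENNReal.ofReal_ne_top, ENNReal.coe_ne_top⟩))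
      measure_Ioc_lt_top
  -- real inequality on integrals
  have hreal : ∫ σ in τ..t, q σ ≤ (∫⁻ σ in Ioc (0:ℝ) t, ℓ σ).toReal
      - (∫⁻ σ in Ioc (0:ℝ) τ, ℓ σ).toReal := by
    have h1 : ((∫⁻ σ in Ioc (0:ℝ) τ, ℓ σ) + ∫⁻ σ in Ioc τ t, ENNReal.ofReal (q σ)).toReal
        ≤ (∫⁻ σ in Ioc (0:ℝ) t, ℓ σ).toReal := by
      apply ENNReal.toReal_mono (hfin t) hsuper
    rw [ENNReal.toReal_add (hfin τ) (by rw [← hinteq]; exact ENNReal.ofReal_ne_top)] at h1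
    rw [← hinteq, ENNReal.toReal_ofReal (intervalIntegral.integral_nonneg hτ.2
      (fun σ _ => hqnn σ))] at h1
    linarith
  -- conclude
  calc edist (𝒳 τ x) (𝒳 τ y) = ENNReal.ofReal (dist (𝒳 τ x) (𝒳 τ y)) := edist_dist _ _
    _ ≤ ENNReal.ofReal (dist (𝒳 t x) (𝒳 t y) * Real.exp (∫ σ in τ..t, q σ)) :=
        ENNReal.ofReal_le_ofReal hdist
    _ = ENNReal.ofReal (dist (𝒳 t x) (𝒳 t y)) *
        ENNReal.ofReal (Real.exp (∫ σ in τ..t, q σ)) := ENNReal.ofReal_mul dist_nonneg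
    _ ≤ _ := by
        rw [← edist_dist]
        exact mul_le_mul_right (ENNReal.ofReal_le_ofReal (Real.exp_le_exp.2 hreal)) _

end Key

/-- `C^{0,r}` transport estimate along the flow of a Lipschitz vector
field, with a constant depending only on `d` and `r`: the exponential amplification factor
involves `V(t) = ∫₀ᵗ ‖v(s)‖_{Lip(O(s))} ds`. -/
theorem holder_transport_estimate (d : ℕ) (hd : 1 ≤ d) (r : ℝ) (hr : r ∈ Ioo (0 : ℝ) 1) :
    ∃ C > (0 : ℝ), ∀ (T : ℝ), 0 < T →
      ∀ v : ℝ → Ed d → Ed d, Continuous (Function.uncurry v) →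
        (∃ Cv, ∀ t x, ‖v t x‖ ≤ Cv) → (∃ K : ℝ≥0, ∀ t, LipschitzWith K (v t)) →
      ∀ 𝒳 : ℝ → Ed d → Ed d, IsFlow d v 𝒳 →
      ∀ O₀ : Set (Ed d), IsOpen O₀ →
      ∀ f : ℝ → Ed d → ℝ, ContDiff ℝ 1 (Function.uncurry f) →
      ∀ g : ℝ → Ed d → ℝ, Continuous (Function.uncurry g) →
        (∀ t ∈ Icc (0 : ℝ) T, ∀ x ∈ 𝒳 t '' O₀,
          deriv (fun τ => f τ x) t + fderiv ℝ (f t) x (v t x) = g t x) →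
      ∀ t ∈ Icc (0 : ℝ) T,
        c0rN r (𝒳 t '' O₀) (f t)
          ≤ ENNReal.ofReal C
            * (c0rN r O₀ (f 0)
                + ∫⁻ τ in Ioc (0 : ℝ) t,
                    c0rN r (𝒳 τ '' O₀) (g τ)
                      * ENNReal.ofReal (Real.exp (- C *
                          (∫⁻ σ in Ioc (0 : ℝ) τ, lipN (𝒳 σ '' O₀) (v σ)).toReal)))
            * ENNReal.ofReal (Real.exp (C *
                (∫⁻ σ in Ioc (0 : ℝ) t, lipN (𝒳 σ '' O₀) (v σ)).toReal)) := by
  refine ⟨2, by norm_num, ?_⟩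
  rintro T hTpos v hvc ⟨Cv, hCv⟩ ⟨K, hK⟩ 𝒳 hX O₀ hO₀ f hf g hg hpde t ht
  have hT : (0:ℝ) ≤ T := hTpos.le
  have ht0 : (0:ℝ) ≤ t := ht.1
  set ℓ : ℝ → ℝ≥0∞ := fun σ => lipN (𝒳 σ '' O₀) (v σ) with hℓ_def
  set VE : ℝ → ℝ≥0∞ := fun τ => ∫⁻ σ in Ioc (0:ℝ) τ, ℓ σ with hVE_def
  -- finiteness of VE
  have hfin : ∀ s : ℝ, VE s ≠ ∞ := by
    intro s
    have hb : ∀ σ, ℓ σ ≤ ENNReal.ofReal Cv + K := fun σ =>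
      lipN_le_of_bounds (fun z => hCv σ z) (hK σ)
    refine ne_of_lt (lt_of_le_of_lt (lintegral_mono hb) ?_)
    rw [setLIntegral_const]
    exact ENNReal.mul_lt_top
      (lt_top_iff_ne_top.2 (ENNReal.add_ne_top.2 ⟨ENNReal.ofReal_ne_top, ENNReal.coe_ne_top⟩))
      measure_Ioc_lt_top
  have hVmono : ∀ {a b : ℝ}, a ≤ b → VE a ≤ VE b := fun hab =>
    lintegral_mono' (Measure.restrict_mono (Ioc_subset_Ioc_right hab) le_rfl) le_rfl
  have hVrmono : ∀ τ, τ ≤ t → (VE τ).toReal ≤ (VE t).toReal := fun τ hτ =>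
    ENNReal.toReal_mono (hfin t) (hVmono hτ)
  have hVE0 : VE 0 = 0 := by
    rw [hVE_def]
    simp only [Ioc_self, Measure.restrict_empty, lintegral_zero_measure]
  set E2 : ℝ≥0∞ := ENNReal.ofReal (Real.exp (2 * (VE t).toReal)) with hE2_def
  set I2 : ℝ≥0∞ := ∫⁻ τ in Ioc (0:ℝ) t,
    c0rN r (𝒳 τ '' O₀) (g τ) * ENNReal.ofReal (Real.exp (-2 * (VE τ).toReal)) with hI2_def
  have hE2top : E2 ≠ ∞ := ENNReal.ofReal_ne_top
  have hE2one : (1:ℝ≥0∞) ≤ E2 := by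
    rw [hE2_def]
    refine ENNReal.one_le_ofReal.2 (Real.one_le_exp ?_)
    have := ENNReal.toReal_nonneg (a := VE t)
    linarith
  have hGint : ∀ z : Ed d, IntervalIntegrable (fun τ => g τ (𝒳 τ z)) volume 0 t := by
    intro z
    apply ContinuousOn.intervalIntegrable
    rw [uIcc_of_le ht0]
    exact hg.comp_continuousOn (continuousOn_id.prodMk
      ((flow_contOn hvc hCv hX hT z).mono (Icc_subset_Icc_right ht.2)))
  -- pointwise amplification factor bound
  have hfactor : ∀ τ, τ ≤ t → (1:ℝ≥0∞) ≤
      ENNReal.ofReal (Real.exp (-2 * (VE τ).toReal)) * E2 := by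
    intro τ hτ
    rw [hE2_def, ← ENNReal.ofReal_mul (Real.exp_nonneg _), ← Real.exp_add]
    refine ENNReal.one_le_ofReal.2 (Real.one_le_exp ?_)
    have := hVrmono τ hτ
    linarith
  -- sup part
  have hsup : supN (𝒳 t '' O₀) (f t) ≤ supN O₀ (f 0) + I2 * E2 := by
    show (⨆ z ∈ 𝒳 t '' O₀, (‖f t z‖₊ : ℝ≥0∞)) ≤ _
    refine iSup₂_le ?_
    rintro z ⟨x, hx, rfl⟩
    have hid := transport_identity hvc hCv hX hT hf hg hpde hx ht
    rw [hid]
    have htri : (‖f 0 x + ∫ τ in (0:ℝ)..t, g τ (𝒳 τ x)‖₊ : ℝ≥0∞)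
        ≤ (‖f 0 x‖₊ : ℝ≥0∞) + (‖∫ τ in (0:ℝ)..t, g τ (𝒳 τ x)‖₊ : ℝ≥0∞) := by
      exact_mod_cast nnnorm_add_le _ _
    refine le_trans htri (add_le_add (le_supN' hx) ?_)
    rw [intervalIntegral.integral_of_le ht0]
    refine le_trans (enorm_integral_le_lintegral_enorm _) ?_
    have hptw : ∀ τ ∈ Ioc (0:ℝ) t, (‖g τ (𝒳 τ x)‖₊ : ℝ≥0∞)
        ≤ (c0rN r (𝒳 τ '' O₀) (g τ) * ENNReal.ofReal (Real.exp (-2 * (VE τ).toReal))) * E2 := by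
      intro τ hτ
      have h1 : (‖g τ (𝒳 τ x)‖₊ : ℝ≥0∞) ≤ c0rN r (𝒳 τ '' O₀) (g τ) :=
        (le_supN' (mem_image_of_mem _ hx)).trans le_self_add
      calc (‖g τ (𝒳 τ x)‖₊ : ℝ≥0∞) = (‖g τ (𝒳 τ x)‖₊ : ℝ≥0∞) * 1 := (mul_one _).symm
        _ ≤ c0rN r (𝒳 τ '' O₀) (g τ) *
            (ENNReal.ofReal (Real.exp (-2 * (VE τ).toReal)) * E2) :=
              mul_le_mul' h1 (hfactor τ hτ.2)
        _ = _ := by ring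
    refine le_trans (lintegral_mono_ae
      ((ae_restrict_iff' measurableSet_Ioc).2 (Filter.Eventually.of_forall hptw))) ?_
    rw [lintegral_mul_const' E2 _ hE2top]
  -- Hölder part
  have hhol : holSemi r (𝒳 t '' O₀) (f t) ≤ holSemi r O₀ (f 0) * E2 + I2 * E2 := by
    show (⨆ z ∈ 𝒳 t '' O₀, ⨆ w ∈ 𝒳 t '' O₀,
        (‖f t z - f t w‖₊ : ℝ≥0∞) / edist z w ^ r) ≤ _
    refine iSup₂_le ?_
    rintro z ⟨x, hx, rfl⟩
    refine iSup₂_le ?_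
    rintro w ⟨y, hy, rfl⟩
    rcases eq_or_ne (𝒳 t x) (𝒳 t y) with heq | hne
    · rw [heq]
      simp
    · refine ENNReal.div_le_of_le_mul ?_
      have hidx := transport_identity hvc hCv hX hT hf hg hpde hx ht
      have hidy := transport_identity hvc hCv hX hT hf hg hpde hy ht
      have hsub : f t (𝒳 t x) - f t (𝒳 t y)
          = (f 0 x - f 0 y) + ∫ τ in (0:ℝ)..t, (g τ (𝒳 τ x) - g τ (𝒳 τ y)) := by
        rw [hidx, hidy, intervalIntegral.integral_sub (hGint x) (hGint y)]
        ring
      rw [hsub]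
      have htri : (‖(f 0 x - f 0 y) + ∫ τ in (0:ℝ)..t, (g τ (𝒳 τ x) - g τ (𝒳 τ y))‖₊ : ℝ≥0∞)
          ≤ (‖f 0 x - f 0 y‖₊ : ℝ≥0∞)
            + (‖∫ τ in (0:ℝ)..t, (g τ (𝒳 τ x) - g τ (𝒳 τ y))‖₊ : ℝ≥0∞) := by
        exact_mod_cast nnnorm_add_le _ _
      refine le_trans htri ?_
      have hrtop : edist (𝒳 t x) (𝒳 t y) ^ r ≠ ∞ :=
        ENNReal.rpow_ne_top_of_nonneg hr.1.le (edist_ne_top _ _)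
      -- term A
      have hA : (‖f 0 x - f 0 y‖₊ : ℝ≥0∞)
          ≤ holSemi r O₀ (f 0) * E2 * edist (𝒳 t x) (𝒳 t y) ^ r := by
        refine le_trans (nnnorm_le_holSemi_mul hr.1 hx hy) ?_
        rw [mul_assoc]
        refine mul_le_mul_right ?_ _
        have hkey := edist_flow_key hvc hCv hK hX hT hx hy ht ⟨le_refl 0, ht0⟩ hne
        rw [flow_zero hX x, flow_zero hX y] at hkey
        have h00 : (∫⁻ σ in Ioc (0:ℝ) 0, lipN (𝒳 σ '' O₀) (v σ)) = 0 := by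
          simp only [Ioc_self, Measure.restrict_empty, lintegral_zero_measure]
        rw [h00] at hkey
        simp only [ENNReal.toReal_zero, sub_zero] at hkey
        have hbase : (1:ℝ≥0∞) ≤ ENNReal.ofReal (Real.exp
            ((∫⁻ σ in Ioc (0:ℝ) t, lipN (𝒳 σ '' O₀) (v σ)).toReal)) :=
          ENNReal.one_le_ofReal.2 (Real.one_le_exp ENNReal.toReal_nonneg)
        calc edist x y ^ r
            ≤ (edist (𝒳 t x) (𝒳 t y) * ENNReal.ofReal (Real.exp
              ((∫⁻ σ in Ioc (0:ℝ) t, lipN (𝒳 σ '' O₀) (v σ)).toReal))) ^ r :=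
              ENNReal.rpow_le_rpow hkey hr.1.le
          _ = edist (𝒳 t x) (𝒳 t y) ^ r * (ENNReal.ofReal (Real.exp
              ((∫⁻ σ in Ioc (0:ℝ) t, lipN (𝒳 σ '' O₀) (v σ)).toReal))) ^ r :=
              ENNReal.mul_rpow_of_nonneg _ _ hr.1.le
          _ ≤ edist (𝒳 t x) (𝒳 t y) ^ r * E2 := by
              refine mul_le_mul_right ?_ _
              have hstep : (ENNReal.ofReal (Real.exp
                  ((∫⁻ σ in Ioc (0:ℝ) t, lipN (𝒳 σ '' O₀) (v σ)).toReal))) ^ r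
                  ≤ ENNReal.ofReal (Real.exp
                  ((∫⁻ σ in Ioc (0:ℝ) t, lipN (𝒳 σ '' O₀) (v σ)).toReal)) := by
                have := ENNReal.rpow_le_rpow_of_exponent_le hbase hr.2.le
                rwa [ENNReal.rpow_one] at this
              refine le_trans hstep ?_
              · rw [hE2_def]
                refine ENNReal.ofReal_le_ofReal (Real.exp_le_exp.2 ?_)
                have := ENNReal.toReal_nonneg
                  (a := ∫⁻ σ in Ioc (0:ℝ) t, lipN (𝒳 σ '' O₀) (v σ))
                linarith
          _ = E2 * edist (𝒳 t x) (𝒳 t y) ^ r := mul_comm _ _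
      -- term B
      have hB : (‖∫ τ in (0:ℝ)..t, (g τ (𝒳 τ x) - g τ (𝒳 τ y))‖₊ : ℝ≥0∞)
          ≤ I2 * E2 * edist (𝒳 t x) (𝒳 t y) ^ r := by
        rw [intervalIntegral.integral_of_le ht0]
        refine le_trans (enorm_integral_le_lintegral_enorm _) ?_
        have hptw : ∀ τ ∈ Ioc (0:ℝ) t, (‖g τ (𝒳 τ x) - g τ (𝒳 τ y)‖₊ : ℝ≥0∞)
            ≤ (c0rN r (𝒳 τ '' O₀) (g τ) * ENNReal.ofReal (Real.exp (-2 * (VE τ).toReal)))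
              * (E2 * edist (𝒳 t x) (𝒳 t y) ^ r) := by
          intro τ hτ
          have hτt : τ ∈ Icc (0:ℝ) t := ⟨hτ.1.le, hτ.2⟩
          have h1 : (‖g τ (𝒳 τ x) - g τ (𝒳 τ y)‖₊ : ℝ≥0∞)
              ≤ holSemi r (𝒳 τ '' O₀) (g τ) * edist (𝒳 τ x) (𝒳 τ y) ^ r :=
            nnnorm_le_holSemi_mul hr.1 (mem_image_of_mem _ hx) (mem_image_of_mem _ hy)
          have hkey := edist_flow_key hvc hCv hK hX hT hx hy ht hτt hne
          have hbase : (1:ℝ≥0∞) ≤ ENNReal.ofReal (Real.exp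
              ((VE t).toReal - (VE τ).toReal)) := by
            refine ENNReal.one_le_ofReal.2 (Real.one_le_exp ?_)
            have := hVrmono τ hτ.2
            linarith
          have h2 : edist (𝒳 τ x) (𝒳 τ y) ^ r
              ≤ edist (𝒳 t x) (𝒳 t y) ^ r *
                (ENNReal.ofReal (Real.exp (-2 * (VE τ).toReal)) * E2) := by
            calc edist (𝒳 τ x) (𝒳 τ y) ^ r
                ≤ (edist (𝒳 t x) (𝒳 t y) *
                    ENNReal.ofReal (Real.exp ((VE t).toReal - (VE τ).toReal))) ^ r :=
                  ENNReal.rpow_le_rpow hkey hr.1.le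
              _ = edist (𝒳 t x) (𝒳 t y) ^ r *
                  (ENNReal.ofReal (Real.exp ((VE t).toReal - (VE τ).toReal))) ^ r :=
                  ENNReal.mul_rpow_of_nonneg _ _ hr.1.le
              _ ≤ edist (𝒳 t x) (𝒳 t y) ^ r *
                  (ENNReal.ofReal (Real.exp (-2 * (VE τ).toReal)) * E2) := by
                  refine mul_le_mul_right ?_ _
                  have hstep : (ENNReal.ofReal (Real.exp
                      ((VE t).toReal - (VE τ).toReal))) ^ r
                      ≤ ENNReal.ofReal (Real.exp ((VE t).toReal - (VE τ).toReal)) := by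
                    have := ENNReal.rpow_le_rpow_of_exponent_le hbase hr.2.le
                    rwa [ENNReal.rpow_one] at this
                  refine le_trans hstep ?_
                  · rw [hE2_def, ← ENNReal.ofReal_mul (Real.exp_nonneg _), ← Real.exp_add]
                    refine ENNReal.ofReal_le_ofReal (Real.exp_le_exp.2 ?_)
                    have := hVrmono τ hτ.2
                    have := ENNReal.toReal_nonneg (a := VE τ)
                    linarith
          calc (‖g τ (𝒳 τ x) - g τ (𝒳 τ y)‖₊ : ℝ≥0∞)
              ≤ holSemi r (𝒳 τ '' O₀) (g τ) * edist (𝒳 τ x) (𝒳 τ y) ^ r := h1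
            _ ≤ c0rN r (𝒳 τ '' O₀) (g τ) * (edist (𝒳 t x) (𝒳 t y) ^ r *
                (ENNReal.ofReal (Real.exp (-2 * (VE τ).toReal)) * E2)) :=
                mul_le_mul' le_add_self h2
            _ = _ := by ring
        refine le_trans (lintegral_mono_ae
          ((ae_restrict_iff' measurableSet_Ioc).2 (Filter.Eventually.of_forall hptw))) ?_
        rw [lintegral_mul_const' _ _ (ENNReal.mul_ne_top hE2top hrtop)]
        rw [mul_assoc]
      calc (‖f 0 x - f 0 y‖₊ : ℝ≥0∞) + (‖∫ τ in (0:ℝ)..t, (g τ (𝒳 τ x) - g τ (𝒳 τ y))‖₊ : ℝ≥0∞)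
          ≤ holSemi r O₀ (f 0) * E2 * edist (𝒳 t x) (𝒳 t y) ^ r
            + I2 * E2 * edist (𝒳 t x) (𝒳 t y) ^ r := add_le_add hA hB
        _ = (holSemi r O₀ (f 0) * E2 + I2 * E2) * edist (𝒳 t x) (𝒳 t y) ^ r :=
            (add_mul _ _ _).symm
  -- combine
  show c0rN r (𝒳 t '' O₀) (f t) ≤ ENNReal.ofReal 2 * (c0rN r O₀ (f 0) + I2) * E2
  have hcft : c0rN r (𝒳 t '' O₀) (f t) = supN (𝒳 t '' O₀) (f t)
      + holSemi r (𝒳 t '' O₀) (f t) := rfl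
  have hcf0 : c0rN r O₀ (f 0) = supN O₀ (f 0) + holSemi r O₀ (f 0) := rfl
  have h2 : ENNReal.ofReal (2:ℝ) = 2 := by
    rw [ENNReal.ofReal_ofNat]
  rw [hcft, hcf0, h2]
  calc supN (𝒳 t '' O₀) (f t) + holSemi r (𝒳 t '' O₀) (f t)
      ≤ (supN O₀ (f 0) + I2 * E2) + (holSemi r O₀ (f 0) * E2 + I2 * E2) :=
        add_le_add hsup hhol
    _ ≤ (supN O₀ (f 0) * E2 + I2 * E2) + (holSemi r O₀ (f 0) * E2 + I2 * E2) :=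
        add_le_add (add_le_add_left (le_mul_of_one_le_right' hE2one) _) le_rfl
    _ ≤ (supN O₀ (f 0) * E2 + I2 * E2) + (holSemi r O₀ (f 0) * E2 + I2 * E2)
        + (supN O₀ (f 0) * E2 + holSemi r O₀ (f 0) * E2) := le_self_add
    _ = 2 * (supN O₀ (f 0) + holSemi r O₀ (f 0) + I2) * E2 := by ring


end
end

section
/- Let d ≥ 1, T > 0, and let v : [0,T] × ℝ^d → ℝ^d be of class C², bounded with bounded first and second derivatives, and divergence-free (Σ_i ∂_{x_i} v_i = 0 everywhere). Let w : [0,T] × ℝ^d → ℝ^d be of class C², bounded with bounded first derivatives, and solve the stretching equation ∂_t w + (v·∇)w = (w·∇)v at every point. If div_x w(0,·) = 0 on ℝ^d, then div_x w(t,·) = 0 on ℝ^d for every t ∈ [0,T]. -/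
open MeasureTheory Set

noncomputable section

/-- The pointwise divergence of a vector field on `ℝ^d`. -/
def divg (d : ℕ) (u : Ed d → Ed d) (x : Ed d) : ℝ :=
  ∑ i : Fin d, fderiv ℝ u x (EuclideanSpace.single i 1) i

lemma Ed.decomp {d : ℕ} (y : Ed d) :
    ((0 : ℝ), y) = ∑ j : Fin d, y j • (((0:ℝ), EuclideanSpace.single j 1) : ℝ × Ed d) := by
  ext
  · simp [Prod.fst_sum]
  · rename_i k
    simp only [Prod.snd_sum, Prod.smul_snd]
    rw [WithLp.ofLp_sum, Finset.sum_apply]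
    simp [EuclideanSpace.single_apply, Finset.sum_ite_eq']

lemma apply_decomp {d : ℕ} (M : (ℝ × Ed d) →L[ℝ] Ed d) (y : Ed d) (i : Fin d) :
    M (0, y) i = ∑ j : Fin d, y j * M (0, EuclideanSpace.single j 1) i := by
  rw [Ed.decomp y, map_sum, WithLp.ofLp_sum, Finset.sum_apply]
  refine Finset.sum_congr rfl fun j _ => ?_
  rw [_root_.map_smul]
  simp [smul_eq_mul]

set_option maxHeartbeats 2000000 in
/-- Propagation of the divergence-free condition by the stretching
equation `∂_t w + (v·∇)w = (w·∇)v` along a divergence-free velocity field. -/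
theorem stretching_preserves_divergence_free
    (d : ℕ) (hd : 1 ≤ d) (T : ℝ) (hT : 0 < T)
    (v : ℝ → Ed d → Ed d)
    (hv_diff : ContDiff ℝ 2 (Function.uncurry v))
    (hv_bdd : ∃ C, ∀ t x, ‖v t x‖ ≤ C)
    (hv_bdd1 : ∃ C, ∀ p : ℝ × Ed d, ‖fderiv ℝ (Function.uncurry v) p‖ ≤ C)
    (hv_bdd2 : ∃ C, ∀ p : ℝ × Ed d, ‖iteratedFDeriv ℝ 2 (Function.uncurry v) p‖ ≤ C)
    (hv_div : ∀ (t : ℝ) (x : Ed d), divg d (v t) x = 0)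
    (w : ℝ → Ed d → Ed d)
    (hw_diff : ContDiff ℝ 2 (Function.uncurry w))
    (hw_bdd : ∃ C, ∀ t x, ‖w t x‖ ≤ C)
    (hw_bdd1 : ∃ C, ∀ p : ℝ × Ed d, ‖fderiv ℝ (Function.uncurry w) p‖ ≤ C)
    (hstretch : ∀ t ∈ Icc (0 : ℝ) T, ∀ x : Ed d,
      deriv (fun τ => w τ x) t + fderiv ℝ (w t) x (v t x) = fderiv ℝ (v t) x (w t x))
    (hw0 : ∀ x : Ed d, divg d (w 0) x = 0) :
    ∀ t ∈ Icc (0 : ℝ) T, ∀ x : Ed d, divg d (w t) x = 0 := by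
  classical
  obtain ⟨Cv, hCv⟩ := hv_bdd
  obtain ⟨C1, hC1⟩ := hv_bdd1
  set F := Function.uncurry w with hF
  set G := Function.uncurry v with hGdef
  set A := fderiv ℝ F with hAdef
  set B := fderiv ℝ G with hBdef
  set e : Fin d → Ed d := fun i => EuclideanSpace.single i 1 with he
  have hFd : Differentiable ℝ F := hw_diff.differentiable two_ne_zero
  have hGd : Differentiable ℝ G := hv_diff.differentiable two_ne_zero
  have hA1 : ContDiff ℝ 1 A := hw_diff.fderiv_right (le_refl 2)
  have hB1 : ContDiff ℝ 1 B := hv_diff.fderiv_right (le_refl 2)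
  set A' := fderiv ℝ A with hA'def
  set B' := fderiv ℝ B with hB'def
  have hA'd : ∀ p, HasFDerivAt A (A' p) p :=
    fun p => ((hA1.differentiable one_ne_zero) p).hasFDerivAt
  have hB'd : ∀ p, HasFDerivAt B (B' p) p :=
    fun p => ((hB1.differentiable one_ne_zero) p).hasFDerivAt
  have hFA : ∀ p, HasFDerivAt F (A p) p := fun p => (hFd p).hasFDerivAt
  have hGB : ∀ p, HasFDerivAt G (B p) p := fun p => (hGd p).hasFDerivAt
  have hAsymm : ∀ p u s, A' p u s = A' p s u :=
    fun p u s => second_derivative_symmetric hFA (hA'd p) u s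
  have hBsymm : ∀ p u s, B' p u s = B' p s u :=
    fun p u s => second_derivative_symmetric hGB (hB'd p) u s
  -- slice derivatives
  have hwx : ∀ t x, HasFDerivAt (w t)
      ((A (t,x)).comp (ContinuousLinearMap.inr ℝ ℝ (Ed d))) x :=
    fun t x => (hFA (t,x)).comp x (hasFDerivAt_prodMk_right t x)
  have hvx : ∀ t x, HasFDerivAt (v t)
      ((B (t,x)).comp (ContinuousLinearMap.inr ℝ ℝ (Ed d))) x :=
    fun t x => (hGB (t,x)).comp x (hasFDerivAt_prodMk_right t x)
  have hwt : ∀ t x, HasDerivAt (fun τ => w τ x) (A (t,x) (1,0)) t := by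
    intro t x
    have h := ((hFA (t,x)).comp t (hasFDerivAt_prodMk_left t x)).hasDerivAt
    simp at h
    exact h
  have hdivw : ∀ t x, divg d (w t) x = ∑ i, A (t,x) (0, e i) i := by
    intro t x
    simp [divg, (hwx t x).fderiv, he]
  have hdivv : ∀ t x, divg d (v t) x = ∑ i, B (t,x) (0, e i) i := by
    intro t x
    simp [divg, (hvx t x).fderiv, he]
  -- stretching in A, B form
  have hstr : ∀ t ∈ Icc (0:ℝ) T, ∀ x, A (t,x) (1, v t x) = B (t,x) (0, w t x) := by
    intro t ht x
    have h := hstretch t ht x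
    rw [(hwt t x).deriv, (hwx t x).fderiv, (hvx t x).fderiv] at h
    have hsplit : ((1:ℝ), v t x) = ((1:ℝ),(0:Ed d)) + ((0:ℝ), v t x) := by simp
    rw [hsplit, map_add]
    simpa using h
  -- the divergence functions and their derivatives
  set Dφ : ℝ × Ed d → (ℝ × Ed d) →L[ℝ] ℝ :=
    fun p => ∑ i, (EuclideanSpace.proj i).comp ((A' p).flip (0, e i)) with hDφdef
  set Dψ : ℝ × Ed d → (ℝ × Ed d) →L[ℝ] ℝ :=
    fun p => ∑ i, (EuclideanSpace.proj i).comp ((B' p).flip (0, e i)) with hDψdef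
  have hDφ_apply : ∀ p u, Dφ p u = ∑ i, A' p u (0, e i) i := by
    intro p u; simp [hDφdef]
  have hDψ_apply : ∀ p u, Dψ p u = ∑ i, B' p u (0, e i) i := by
    intro p u; simp [hDψdef]
  have hφd : ∀ p : ℝ × Ed d,
      HasFDerivAt (fun q => ∑ i, A q (0, e i) i) (Dφ p) p := by
    intro p
    apply HasFDerivAt.fun_sum
    intro i _
    have h1 : HasFDerivAt (fun q => A q (0, e i)) ((A' p).flip (0, e i)) p := by
      have h2 := (hA'd p).clm_apply (hasFDerivAt_const (((0:ℝ), e i) : ℝ × Ed d) p)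
      simpa using h2
    exact (EuclideanSpace.proj i).hasFDerivAt.comp p h1
  have hψd : ∀ p : ℝ × Ed d,
      HasFDerivAt (fun q => ∑ i, B q (0, e i) i) (Dψ p) p := by
    intro p
    apply HasFDerivAt.fun_sum
    intro i _
    have h1 : HasFDerivAt (fun q => B q (0, e i)) ((B' p).flip (0, e i)) p := by
      have h2 := (hB'd p).clm_apply (hasFDerivAt_const (((0:ℝ), e i) : ℝ × Ed d) p)
      simpa using h2
    exact (EuclideanSpace.proj i).hasFDerivAt.comp p h1
  -- div v = 0, so Dψ = 0
  have hψ0 : (fun q : ℝ × Ed d => ∑ i, B q (0, e i) i) = fun _ => (0:ℝ) := by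
    funext q
    have := hv_div q.1 q.2
    rw [hdivv q.1 q.2] at this
    simpa using this
  have hDψ0 : ∀ p u, (∑ i, (B' p u (0, e i)) i) = 0 := by
    intro p u
    have h := hψd p
    rw [hψ0] at h
    have h0 : Dψ p = 0 := h.unique (hasFDerivAt_const 0 p)
    rw [← hDψ_apply, h0]
    rfl
  -- transport equation
  have htr : ∀ t ∈ Icc (0:ℝ) T, ∀ x, Dφ (t,x) (1, v t x) = 0 := by
    intro t ht x
    set p : ℝ × Ed d := (t, x) with hp
    set inrE := ContinuousLinearMap.inr ℝ ℝ (Ed d) with hinr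
    have hc : HasFDerivAt (fun y => A (t,y)) ((A' p).comp inrE) x :=
      (hA'd p).comp x (hasFDerivAt_prodMk_right t x)
    have hc' : HasFDerivAt (fun y => B (t,y)) ((B' p).comp inrE) x :=
      (hB'd p).comp x (hasFDerivAt_prodMk_right t x)
    have hu : HasFDerivAt (fun y => (((1:ℝ), v t y) : ℝ × Ed d))
        (inrE.comp ((B p).comp inrE)) x := by
      have h2 := (hasFDerivAt_const (1:ℝ) x).prodMk (hvx t x)
      exact h2.congr_fderiv (ContinuousLinearMap.ext fun u => by simp [hinr, hp])
    have hu' : HasFDerivAt (fun y => (((0:ℝ), w t y) : ℝ × Ed d))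
        (inrE.comp ((A p).comp inrE)) x := by
      have h2 := (hasFDerivAt_const (0:ℝ) x).prodMk (hwx t x)
      exact h2.congr_fderiv (ContinuousLinearMap.ext fun u => by simp [hinr, hp])
    have hL := hc.clm_apply hu
    have hR := hc'.clm_apply hu'
    have hfun : (fun y => A (t,y) (1, v t y)) = fun y => B (t,y) (0, w t y) :=
      funext fun y => hstr t ht y
    rw [hfun] at hL
    have heq := hL.unique hR
    have hsum : ∀ i : Fin d,
        A p (0, B p (0, e i)) i + A' p (0, e i) (1, v t x) i
        = B p (0, A p (0, e i)) i + B' p (0, e i) (0, w t x) i := by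
      intro i
      have h3 := congrArg (fun z : Ed d => z i) (congrArg (fun (M : Ed d →L[ℝ] Ed d) => (M (e i) : Ed d)) heq)
      simpa [ContinuousLinearMap.add_apply, ContinuousLinearMap.comp_apply,
        ContinuousLinearMap.flip_apply, hinr, PiLp.add_apply] using h3
    have hsum2 : (∑ i, A p (0, B p (0, e i)) i) + (∑ i, A' p (0, e i) (1, v t x) i)
        = (∑ i, B p (0, A p (0, e i)) i) + (∑ i, B' p (0, e i) (0, w t x) i) := by
      rw [← Finset.sum_add_distrib, ← Finset.sum_add_distrib]
      exact Finset.sum_congr rfl fun i _ => hsum i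
    have htrace : (∑ i, A p (0, B p (0, e i)) i) = (∑ i, B p (0, A p (0, e i)) i) := by
      simp only [he]
      calc (∑ i, A p (0, B p (0, EuclideanSpace.single i 1)) i)
          = ∑ i, ∑ j, (B p (0, EuclideanSpace.single i 1)) j
              * A p (0, EuclideanSpace.single j 1) i :=
            Finset.sum_congr rfl fun i _ => apply_decomp (A p) _ i
        _ = ∑ j, ∑ i, (B p (0, EuclideanSpace.single i 1)) j
              * A p (0, EuclideanSpace.single j 1) i := Finset.sum_comm
        _ = ∑ j, B p (0, A p (0, EuclideanSpace.single j 1)) j := by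
            refine Finset.sum_congr rfl fun j _ => ?_
            rw [apply_decomp (B p) _ j]
            exact Finset.sum_congr rfl fun i _ => by ring
        _ = ∑ i, B p (0, A p (0, EuclideanSpace.single i 1)) i := rfl
    have hB'sum : (∑ i, B' p (0, e i) (0, w t x) i) = 0 :=
      calc (∑ i, B' p (0, e i) (0, w t x) i)
          = ∑ i, B' p (0, w t x) (0, e i) i :=
            Finset.sum_congr rfl fun i _ => by rw [hBsymm]
        _ = 0 := hDψ0 p (0, w t x)
    have hA'sum : Dφ p (1, v t x) = ∑ i, A' p (0, e i) (1, v t x) i := by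
      rw [hDφ_apply]
      exact Finset.sum_congr rfl fun i _ => by rw [hAsymm]
    rw [hA'sum]
    linarith [hsum2, htrace, hB'sum]
  -- ODE / characteristics
  intro t₀ ht₀ x₀
  have hCv0 : 0 ≤ Cv := le_trans (norm_nonneg _) (hCv 0 0)
  have hC10 : 0 ≤ C1 := le_trans (norm_nonneg _) (hC1 (0,0))
  have hlip : ∀ t, LipschitzWith (Real.toNNReal C1) (v t) := by
    intro t
    apply lipschitzWith_of_nnnorm_fderiv_le (fun x => (hvx t x).differentiableAt)
    intro x
    rw [← NNReal.coe_le_coe, coe_nnnorm, Real.coe_toNNReal _ hC10, (hvx t x).fderiv]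
    refine ContinuousLinearMap.opNorm_le_bound _ hC10 fun u => ?_
    have h1 : ‖(B (t,x)).comp (ContinuousLinearMap.inr ℝ ℝ (Ed d)) u‖
        = ‖B (t,x) (0, u)‖ := rfl
    rw [h1]
    calc ‖B (t,x) (0, u)‖ ≤ ‖B (t,x)‖ * ‖((0:ℝ), u)‖ := (B (t,x)).le_opNorm _
      _ ≤ C1 * ‖u‖ := by
          have h2 : ‖((0:ℝ), u)‖ = ‖u‖ := by
            simp [Prod.norm_def]
          rw [h2]
          exact mul_le_mul_of_nonneg_right (hC1 (t,x)) (norm_nonneg u)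
  have hpl : IsPicardLindelof v (tmin := 0) (tmax := T) ⟨t₀, ht₀⟩ x₀ (Real.toNNReal (Cv * T)) 0
      (Real.toNNReal Cv) (Real.toNNReal C1) := by
    constructor
    · exact fun t _ => (hlip t).lipschitzOnWith
    · intro x _
      exact (hv_diff.continuous.comp (continuous_id.prodMk continuous_const)).continuousOn
    · intro t _ x _
      rw [Real.coe_toNNReal _ hCv0]
      exact hCv t x
    · have h1 : max (T - t₀) t₀ ≤ T :=
        max_le (by linarith [ht₀.1]) (by linarith [ht₀.2])
      simp only [NNReal.coe_zero, sub_zero, Real.coe_toNNReal _ hCv0,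
        Real.coe_toNNReal _ (mul_nonneg hCv0 hT.le)]
      calc Cv * max (T - t₀) t₀ ≤ Cv * T := mul_le_mul_of_nonneg_left h1 hCv0
        _ = Cv * T := rfl
  obtain ⟨X, hX0, hXd⟩ : ∃ X : ℝ → Ed d, X t₀ = x₀ ∧
      ∀ t ∈ Icc (0:ℝ) T, HasDerivWithinAt X (v t (X t)) (Icc 0 T) t :=
    hpl.exists_eq_forall_mem_Icc_hasDerivWithinAt₀
  set g : ℝ → ℝ := fun s => ∑ i, A (s, X s) (0, e i) i with hg
  have hgd : ∀ s ∈ Icc (0:ℝ) T, HasDerivWithinAt g 0 (Icc 0 T) s := by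
    intro s hs
    have h1 : HasDerivWithinAt (fun s => ((s, X s) : ℝ × Ed d)) (1, v s (X s)) (Icc 0 T) s :=
      (hasDerivWithinAt_id s _).prodMk (hXd s hs)
    have h2 := (hφd (s, X s)).comp_hasDerivWithinAt s h1
    rw [htr s hs (X s)] at h2
    exact h2
  have hconst := norm_image_sub_le_of_norm_deriv_le_segment'
    (f' := fun _ => (0:ℝ)) (C := 0) hgd (fun s _ => by simp) t₀ ht₀
  have hgt₀ : g t₀ = g 0 := by
    simp only [zero_mul] at hconst
    have := norm_sub_eq_zero_iff.mp (le_antisymm hconst (norm_nonneg _))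
    exact this
  have hg0 : g 0 = 0 := by
    have := hw0 (X 0)
    rw [hdivw 0 (X 0)] at this
    exact this
  rw [hdivw t₀ x₀]
  have : g t₀ = ∑ i, A (t₀, x₀) (0, e i) i := by rw [hg]; simp [hX0]
  rw [← this, hgt₀, hg0]

end
end
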